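/- For the Invincible Fighter (u = 1), for every fixed t ≥ 0 the sequence n ↦ N(n,t) (with N(0,t) = 0) is concave in n, and consequently the sequence n ↦ N*(n,t) is concave in n. -/

import Mathlib

open Real MeasureTheory Filter Topology

/-- Auxiliary history-based recursion: `Nhist a u n m t` equals `N(m,t)` when `m ≤ n`. -/
noncomputable def Nhist (a : ℕ → ℝ) (u : ℝ) : ℕ → ℕ → ℝ → ℝ
  | 0, _, _ => 0
  | n + 1, m, t =>
      if m ≤ n then Nhist a u n m t
      else (Finset.Icc 1 (n + 1)).sup'
          (Finset.nonempty_Icc.mpr (Nat.succ_le_succ (Nat.zero_le n)))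
          (fun j => a j + (a j * (1 - u) + u) *
            (Real.exp (-t) * ∫ x in (0:ℝ)..t, Nhist a u n (n + 1 - j) x * Real.exp x))

/-- `Nval a u n t` is `N(n,t)`, the optimal expected number of enemy planes shot down,
with `N(0,t) = 0` and `N(n,t) = max_{1 ≤ j ≤ n} N_n(j,t)`. -/
noncomputable def Nval (a : ℕ → ℝ) (u : ℝ) (n : ℕ) (t : ℝ) : ℝ :=
  Nhist a u n n t

/-- `Nstar a u r t` is `N*(r,t) = e^{-t} ∫_0^t N(r,x) e^x dx` (so `N*(0,t) = 0`). -/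
noncomputable def Nstar (a : ℕ → ℝ) (u : ℝ) (r : ℕ) (t : ℝ) : ℝ :=
  Real.exp (-t) * ∫ x in (0:ℝ)..t, Nval a u r x * Real.exp x

/-- `Nalloc a u n j t` is `N_n(j,t) = a(j) + c(j)·N*(n-j,t)` where `c(j) = a(j)(1-u)+u`. -/
noncomputable def Nalloc (a : ℕ → ℝ) (u : ℝ) (n j : ℕ) (t : ℝ) : ℝ :=
  a j + (a j * (1 - u) + u) * Nstar a u (n - j) t

/-- `Kopt a u n t = min { j ∈ {1,…,n} : N_n(j,t) = N(n,t) }`. -/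
noncomputable def Kopt (a : ℕ → ℝ) (u : ℝ) (n : ℕ) (t : ℝ) : ℕ :=
  sInf {j : ℕ | 1 ≤ j ∧ j ≤ n ∧ Nalloc a u n j t = Nval a u n t}

section Aux

variable (a : ℕ → ℝ) (u : ℝ)

lemma Nhist_eq : ∀ n m t, m ≤ n → Nhist a u n m t = Nval a u m t := by
  intro n
  induction n with
  | zero =>
    intro m t hm
    have : m = 0 := Nat.le_zero.mp hm
    subst this; rfl
  | succ n ih =>
    intro m t hm
    rcases Nat.lt_or_ge m (n+1) with h | h
    · have hm' : m ≤ n := by omega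
      rw [show Nhist a u (n+1) m t = Nhist a u n m t from by rw [Nhist, if_pos hm'],
        ih m t hm']
    · have : m = n+1 := by omega
      subst this; rfl

lemma Nval_zero (t : ℝ) : Nval a u 0 t = 0 := rfl

lemma Nval_succ (n : ℕ) (t : ℝ) :
    Nval a u (n+1) t = (Finset.Icc 1 (n+1)).sup'
      (Finset.nonempty_Icc.mpr (Nat.succ_le_succ (Nat.zero_le n)))
      (fun j => Nalloc a u (n+1) j t) := by
  show Nhist a u (n+1) (n+1) t = _
  rw [Nhist, if_neg (by omega)]
  apply Finset.sup'_congr _ rfl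
  intro j hj
  simp only [Finset.mem_Icc] at hj
  have hx : (fun x => Nhist a u n (n+1-j) x * Real.exp x)
      = fun x => Nval a u (n+1-j) x * Real.exp x := by
    funext x; rw [Nhist_eq a u n (n+1-j) x (by omega)]
  rw [hx]
  rfl

lemma Nval_continuous : ∀ n, Continuous (Nval a u n) := by
  intro n
  induction n using Nat.strong_induction_on with
  | _ n ih =>
    match n with
    | 0 => exact continuous_const
    | (n+1) =>
      have he : (Nval a u (n+1)) = fun t => (Finset.Icc 1 (n+1)).sup'
          (Finset.nonempty_Icc.mpr (Nat.succ_le_succ (Nat.zero_le n)))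
          (fun j => Nalloc a u (n+1) j t) := funext (Nval_succ a u n)
      rw [he]
      apply Continuous.finset_sup'_apply
      intro j hj
      simp only [Finset.mem_Icc] at hj
      have hc : Continuous (fun x => Nval a u (n+1-j) x * Real.exp x) :=
        (ih (n+1-j) (by omega)).mul Real.continuous_exp
      show Continuous fun t => a j + (a j * (1 - u) + u) *
          (Real.exp (-t) * ∫ x in (0:ℝ)..t, Nval a u (n+1-j) x * Real.exp x)
      exact continuous_const.add (continuous_const.mul
        ((Real.continuous_exp.comp continuous_neg).mul
          (intervalIntegral.continuous_primitive (μ := MeasureTheory.volume)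
            (fun c d => hc.intervalIntegrable (μ := MeasureTheory.volume) c d) 0)))

lemma Nstar_zero (t : ℝ) : Nstar a u 0 t = 0 := by
  simp [Nstar, Nval_zero]

lemma Nstar_step (t : ℝ) (ht : 0 ≤ t) (k : ℕ)
    (hk : ∀ x, 0 ≤ x → Nval a u (k+2) x + Nval a u k x ≤ 2 * Nval a u (k+1) x) :
    Nstar a u (k+2) t + Nstar a u k t ≤ 2 * Nstar a u (k+1) t := by
  have h2 := (((Nval_continuous a u (k+2)).mul Real.continuous_exp).intervalIntegrable
    (μ := MeasureTheory.volume) (0:ℝ) t)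
  have h0 := (((Nval_continuous a u k).mul Real.continuous_exp).intervalIntegrable (μ := MeasureTheory.volume) (0:ℝ) t)
  have h1 := (((Nval_continuous a u (k+1)).mul Real.continuous_exp).intervalIntegrable
    (μ := MeasureTheory.volume) (0:ℝ) t)
  have key : (∫ x in (0:ℝ)..t,
        (Nval a u (k+2) x * Real.exp x + Nval a u k x * Real.exp x))
      ≤ ∫ x in (0:ℝ)..t, 2 * (Nval a u (k+1) x * Real.exp x) := by
    apply intervalIntegral.integral_mono_on ht (h2.add h0) (h1.const_mul 2)
    intro x hx
    have h := hk x hx.1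
    have he := (Real.exp_pos x).le
    simp only [Pi.mul_apply]; nlinarith
  rw [intervalIntegral.integral_add (f := fun x => Nval a u (k+2) x * Real.exp x) (g := fun x => Nval a u k x * Real.exp x) h2 h0, intervalIntegral.integral_const_mul] at key
  have hep := (Real.exp_pos (-t)).le
  unfold Nstar
  nlinarith

/-- Sup-convolution concavity step. -/
lemma supconv_step (f g h : ℕ → ℝ) (m : ℕ) (hm : 1 ≤ m)
    (hf : ∀ i j : ℕ, 1 ≤ i → i ≤ j → j + 1 ≤ m + 2 → f (j+1) - f j ≤ f (i+1) - f i)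
    (hg : ∀ i j : ℕ, i ≤ j → j + 1 ≤ m + 1 → g (j+1) - g j ≤ g (i+1) - g i)
    (hh : ∀ r, 1 ≤ r → r ≤ m + 2 → ∃ j, 1 ≤ j ∧ j ≤ r ∧ h r = f j + g (r - j))
    (hle : ∀ r j, 1 ≤ j → j ≤ r → r ≤ m + 2 → f j + g (r - j) ≤ h r) :
    h (m+2) + h m ≤ 2 * h (m+1) := by
  obtain ⟨j₂, hj₂1, hj₂2, e₂⟩ := hh (m+2) (by omega) le_rfl
  obtain ⟨j₀, hj₀1, hj₀2, e₀⟩ := hh m hm (by omega)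
  rcases le_or_gt j₂ (j₀+1) with hc | hc
  · have hA : f j₂ + g (m+1-j₂) ≤ h (m+1) := hle (m+1) j₂ hj₂1 (by omega) (by omega)
    have hB : f j₀ + g (m+1-j₀) ≤ h (m+1) := hle (m+1) j₀ hj₀1 (by omega) (by omega)
    have hg' : g ((m+1-j₂)+1) - g (m+1-j₂) ≤ g ((m-j₀)+1) - g (m-j₀) :=
      hg (m-j₀) (m+1-j₂) (by omega) (by omega)
    have hq : m + 2 - j₂ = (m+1-j₂) + 1 := by omega
    have hp : m + 1 - j₀ = (m-j₀) + 1 := by omega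
    rw [hp] at hB
    rw [e₂, e₀, hq]
    linarith
  · have hA : f (j₂-1) + g (m+1-(j₂-1)) ≤ h (m+1) :=
      hle (m+1) (j₂-1) (by omega) (by omega) (by omega)
    have hB : f (j₀+1) + g (m+1-(j₀+1)) ≤ h (m+1) :=
      hle (m+1) (j₀+1) (by omega) (by omega) (by omega)
    have hf' : f ((j₂-1)+1) - f (j₂-1) ≤ f (j₀+1) - f j₀ :=
      hf j₀ (j₂-1) hj₀1 (by omega) (by omega)
    have hgq : m+1-(j₂-1) = m+2-j₂ := by omega
    have hgp : m+1-(j₀+1) = m-j₀ := by omega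
    have hfq : (j₂-1)+1 = j₂ := by omega
    rw [hgq] at hA
    rw [hgp] at hB
    rw [hfq] at hf'
    rw [e₂, e₀]
    linarith

/-- Antitone-on-a-range from successive decrease. -/
lemma d_antitone (d : ℕ → ℝ) (N : ℕ) (hstep : ∀ k, k + 1 ≤ N → d (k+1) ≤ d k) :
    ∀ i j, i ≤ j → j ≤ N → d j ≤ d i := by
  intro i j hij hjN
  induction j with
  | zero => have : i = 0 := by omega
            subst this; exact le_rfl
  | succ j ihj =>
    rcases Nat.lt_or_ge i (j+1) with h | h
    · exact le_trans (hstep j hjN) (ihj (by omega) (by omega))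
    · have : i = j + 1 := by omega
      subst this; exact le_rfl

end Aux

section Main

variable (a : ℕ → ℝ)

lemma Nval_one (t : ℝ) : Nval a 1 1 t = a 1 := by
  rw [Nval_succ]
  have h : Nalloc a 1 (0+1) 1 t = a 1 := by simp [Nalloc, Nstar_zero]
  apply le_antisymm
  · apply Finset.sup'_le
    intro j hj
    simp only [Finset.mem_Icc] at hj
    have : j = 1 := by omega
    subst this
    rw [h]
  · exact h ▸ Finset.le_sup' (fun j => Nalloc a 1 (0+1) j t) (by simp)

lemma Nstar_one (t : ℝ) : Nstar a 1 1 t = a 1 * (1 - Real.exp (-t)) := by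
  unfold Nstar
  rw [show (fun x => Nval a 1 1 x * Real.exp x) = fun x => a 1 * Real.exp x from
    funext fun x => by rw [Nval_one]]
  rw [intervalIntegral.integral_const_mul, integral_exp, Real.exp_neg]
  have := Real.exp_ne_zero t
  field_simp
  rw [Real.exp_zero]

lemma Nval_attained (n : ℕ) (t : ℝ) :
    ∃ j, 1 ≤ j ∧ j ≤ n + 1 ∧ Nval a 1 (n+1) t = a j + Nstar a 1 (n+1-j) t := by
  obtain ⟨j, hj, hje⟩ := Finset.exists_mem_eq_sup' (α := ℝ)
    (Finset.nonempty_Icc.mpr (Nat.succ_le_succ (Nat.zero_le n)))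
    (fun j => Nalloc a 1 (n+1) j t)
  simp only [Finset.mem_Icc] at hj
  refine ⟨j, hj.1, hj.2, ?_⟩
  rw [Nval_succ, hje]
  simp [Nalloc]

lemma Nval_le_ge (n j : ℕ) (t : ℝ) (h1 : 1 ≤ j) (h2 : j ≤ n + 1) :
    a j + Nstar a 1 (n+1-j) t ≤ Nval a 1 (n+1) t := by
  rw [Nval_succ]
  have hmem : j ∈ Finset.Icc 1 (n+1) := Finset.mem_Icc.mpr ⟨h1, h2⟩
  have := Finset.le_sup' (fun j => Nalloc a 1 (n+1) j t) hmem
  simpa [Nalloc, -Finset.le_sup'_iff] using this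

lemma Nval_concave_aux (haI : ∀ j, a j ∈ Set.Icc (0:ℝ) 1) (ha0 : a 0 = 0)
    (hconc : ∀ j : ℕ, a (j + 2) - a (j + 1) < a (j + 1) - a j) :
    ∀ m : ℕ, ∀ x : ℝ, 0 ≤ x →
      Nval a 1 (m+2) x + Nval a 1 m x ≤ 2 * Nval a 1 (m+1) x := by
  have ha_nonneg : ∀ j, 0 ≤ a j := fun j => (haI j).1
  have haf : ∀ i j : ℕ, i ≤ j → a (j+1) - a j ≤ a (i+1) - a i := by
    intro i j hij
    refine antitone_nat_of_succ_le (f := fun k => a (k+1) - a k) (fun k => ?_) hij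
    show a (k+1+1) - a (k+1) ≤ a (k+1) - a k
    have e : k+1+1 = k+2 := by omega
    rw [e]
    have := hconc k
    linarith
  intro m
  induction m using Nat.strong_induction_on with
  | _ m ih =>
    intro x hx
    match m, ih with
    | 0, _ =>
      show Nval a 1 2 x + Nval a 1 0 x ≤ 2 * Nval a 1 1 x
      rw [Nval_one, Nval_zero]
      have h2 : Nval a 1 2 x ≤ 2 * a 1 := by
        rw [show (2:ℕ) = 1 + 1 from rfl, Nval_succ]
        apply Finset.sup'_le
        intro j hj
        simp only [Finset.mem_Icc] at hj
        obtain ⟨hj1, hj2⟩ := hj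
        interval_cases j
        · show Nalloc a 1 (1+1) 1 x ≤ 2 * a 1
          have : Nalloc a 1 (1+1) 1 x = a 1 + Nstar a 1 1 x := by simp [Nalloc]
          rw [this, Nstar_one]
          nlinarith [(Real.exp_pos (-x)).le, ha_nonneg 1]
        · show Nalloc a 1 (1+1) 2 x ≤ 2 * a 1
          have : Nalloc a 1 (1+1) 2 x = a 2 := by simp [Nalloc, Nstar_zero]
          rw [this]
          have := hconc 0
          have := ha0
          linarith
      linarith
    | (m'+1), ih =>
      have hg_succ : ∀ k, k + 1 ≤ m' + 1 →
          Nstar a 1 (k+2) x + Nstar a 1 k x ≤ 2 * Nstar a 1 (k+1) x := by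
        intro k hk
        exact Nstar_step a 1 x hx k (ih k (by omega))
      have hg : ∀ i j : ℕ, i ≤ j → j + 1 ≤ (m'+1) + 1 →
          Nstar a 1 (j+1) x - Nstar a 1 j x ≤ Nstar a 1 (i+1) x - Nstar a 1 i x := by
        intro i j hij hj
        have := d_antitone (fun k => Nstar a 1 (k+1) x - Nstar a 1 k x) (m'+1)
          (fun k hk => by
            show Nstar a 1 (k+1+1) x - Nstar a 1 (k+1) x
              ≤ Nstar a 1 (k+1) x - Nstar a 1 k x
            have e : k+1+1 = k+2 := by omega
            rw [e]
            have := hg_succ k hk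
            linarith) i j hij (by omega)
        simpa using this
      have hf : ∀ i j : ℕ, 1 ≤ i → i ≤ j → j + 1 ≤ (m'+1) + 2 →
          a (j+1) - a j ≤ a (i+1) - a i := fun i j _ hij _ => haf i j hij
      have hh : ∀ r, 1 ≤ r → r ≤ (m'+1) + 2 →
          ∃ j, 1 ≤ j ∧ j ≤ r ∧ Nval a 1 r x = a j + Nstar a 1 (r-j) x := by
        intro r hr1 _
        obtain ⟨r', rfl⟩ : ∃ r', r = r'+1 := ⟨r-1, by omega⟩
        exact Nval_attained a r' x
      have hle : ∀ r j, 1 ≤ j → j ≤ r → r ≤ (m'+1) + 2 →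
          a j + Nstar a 1 (r-j) x ≤ Nval a 1 r x := by
        intro r j h1 h2 _
        obtain ⟨r', rfl⟩ : ∃ r', r = r'+1 := ⟨r-1, by omega⟩
        exact Nval_le_ge a r' j x h1 h2
      exact supconv_step a (fun k => Nstar a 1 k x) (fun r => Nval a 1 r x) (m'+1)
        (by omega) hf hg hh hle

end Main

/-- For the Invincible Fighter (`u = 1`), for every fixed `t ≥ 0` the sequence
`n ↦ N(n,t)` is concave in `n`, and consequently so is `n ↦ N*(n,t)`. -/
theorem invincible_N_concave
    (a : ℕ → ℝ) (haI : ∀ j, a j ∈ Set.Icc (0:ℝ) 1) (ha0 : a 0 = 0)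
    (hmono : StrictMono a)
    (hconc : ∀ j : ℕ, a (j + 2) - a (j + 1) < a (j + 1) - a j) :
    ∀ t : ℝ, 0 ≤ t →
      (∀ n : ℕ, Nval a 1 (n + 2) t - Nval a 1 (n + 1) t ≤ Nval a 1 (n + 1) t - Nval a 1 n t) ∧
      (∀ n : ℕ, Nstar a 1 (n + 2) t - Nstar a 1 (n + 1) t ≤ Nstar a 1 (n + 1) t - Nstar a 1 n t) := by
  intro t ht
  have P := Nval_concave_aux a haI ha0 hconc
  constructor
  · intro n; have := P n t ht; linarith
  · intro n
    have := Nstar_step a 1 t ht n (fun x hx => P n x hx)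
    linarith
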